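/- For (z₁, z₂, z₃, z₄, r) ∈ T, choose y_j ∈ ℂ¹ with y_j² = z_j and set Ψ(z₁, z₂, z₃, z₄, r) := (y₁y₃/(y₂y₄), y₁y₄/(y₂y₃), y₁y₂/(y₃y₄), r²) ∈ T̃. Then the class of Ψ(z₁, z₂, z₃, z₄, r) in T̃/Z̃ is independent of the choice of the square roots y_j; the induced map T → T̃/Z̃ is a group homomorphism with kernel Z; and it induces a group isomorphism T/Z ≅ T̃/Z̃. (This describes the effect of the real exceptional isomorphism U(2,2)/center ≅ SO(4,2)/center on maximal tori.) -/

import Mathlib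

/-- The map `T → T̃`, `((z₁,z₂,z₃,z₄), r) ↦ (y₁y₃/(y₂y₄), y₁y₄/(y₂y₃), y₁y₂/(y₃y₄), r²)`
computed from a choice of square roots `y_j² = z_j`. -/
noncomputable def PsiMap (y : Fin 4 → ℂ) (r : ℝ) : ℂ × ℂ × ℂ × ℝ :=
  (y 0 * y 2 / (y 1 * y 3), y 0 * y 3 / (y 1 * y 2), y 0 * y 1 / (y 2 * y 3), r ^ 2)

private lemma sq_cases' {a b : ℂ} (h : a ^ 2 = b ^ 2) : a = b ∨ a = -b := by
  have h1 : (a - b) * (a + b) = 0 := by linear_combination h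
  rcases mul_eq_zero.1 h1 with h | h
  · exact Or.inl (sub_eq_zero.mp h)
  · exact Or.inr (eq_neg_of_add_eq_zero_left h)

private lemma abs_eq_one_of_sq' {y : ℂ} (h : ‖y ^ 2‖ = 1) : ‖y‖ = 1 := by
  rw [norm_pow] at h
  have h0 := norm_nonneg y
  have h1 : (‖y‖ - 1) * (‖y‖ + 1) = 0 := by linear_combination h
  rcases mul_eq_zero.1 h1 with h2 | h2
  · linarith
  · linarith

private lemma exists_sqrt' {z : ℂ} (hz : z ≠ 0) : ∃ y : ℂ, y ^ 2 = z := by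
  refine ⟨Complex.exp (Complex.log z / 2), ?_⟩
  rw [sq, ← Complex.exp_add]
  have h : Complex.log z / 2 + Complex.log z / 2 = Complex.log z := by ring
  rw [h, Complex.exp_log hz]

private lemma comp_eq' {a b c d a' b' c' d' : ℂ} (ha : a ≠ 0) (hb : b ≠ 0) (hc : c ≠ 0) (hd : d ≠ 0)
    (h2 : b' ^ 2 = b ^ 2) (h4 : d' ^ 2 = d ^ 2) :
    a' * c' / (b' * d') = ((a'/a)*(b'/b)*(c'/c)*(d'/d)) * (a*c/(b*d)) := by
  have hb' : b' ≠ 0 := by intro h; rw [h] at h2; exact hb (by simpa using h2.symm)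
  have hd' : d' ≠ 0 := by intro h; rw [h] at h4; exact hd (by simpa using h4.symm)
  field_simp
  rw [h2, h4]

theorem real_torus_isomorphism :
    -- values land in T̃, and the class modulo Z̃ is independent of the choice of square roots
    (∀ (z : Fin 4 → ℂ) (r : ℝ), (∀ j, ‖z j‖ = 1) → 0 < r →
      ∀ y y' : Fin 4 → ℂ, (∀ j, y j ^ 2 = z j) → (∀ j, y' j ^ 2 = z j) →
        (‖(PsiMap y r).1‖ = 1 ∧ ‖(PsiMap y r).2.1‖ = 1 ∧
          ‖(PsiMap y r).2.2.1‖ = 1 ∧ 0 < (PsiMap y r).2.2.2) ∧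
        (∃ ε : ℂ, (ε = 1 ∨ ε = -1) ∧
          (PsiMap y' r).1 = ε * (PsiMap y r).1 ∧
          (PsiMap y' r).2.1 = ε * (PsiMap y r).2.1 ∧
          (PsiMap y' r).2.2.1 = ε * (PsiMap y r).2.2.1 ∧
          (PsiMap y' r).2.2.2 = (PsiMap y r).2.2.2)) ∧
    -- the induced map T → T̃/Z̃ is a group homomorphism
    (∀ (y y' : Fin 4 → ℂ) (r r' : ℝ),
      PsiMap (fun j => y j * y' j) (r * r') =
        ((PsiMap y r).1 * (PsiMap y' r').1, (PsiMap y r).2.1 * (PsiMap y' r').2.1,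
          (PsiMap y r).2.2.1 * (PsiMap y' r').2.2.1,
          (PsiMap y r).2.2.2 * (PsiMap y' r').2.2.2)) ∧
    -- its kernel is Z = {(z,z,z,z,r)}
    (∀ (z : Fin 4 → ℂ) (r : ℝ), (∀ j, ‖z j‖ = 1) → 0 < r →
      ∀ y : Fin 4 → ℂ, (∀ j, y j ^ 2 = z j) →
        ((∃ ε : ℂ, (ε = 1 ∨ ε = -1) ∧ ∃ s : ℝ, 0 < s ∧
            (PsiMap y r).1 = ε ∧ (PsiMap y r).2.1 = ε ∧ (PsiMap y r).2.2.1 = ε ∧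
            (PsiMap y r).2.2.2 = s) ↔
          (z 0 = z 1 ∧ z 1 = z 2 ∧ z 2 = z 3))) ∧
    -- the induced map T/Z → T̃/Z̃ is surjective (hence an isomorphism)
    (∀ (w₁ w₂ w₃ : ℂ) (s : ℝ), ‖w₁‖ = 1 → ‖w₂‖ = 1 →
      ‖w₃‖ = 1 → 0 < s →
      ∃ (z : Fin 4 → ℂ) (r : ℝ) (y : Fin 4 → ℂ),
        (∀ j, ‖z j‖ = 1) ∧ 0 < r ∧ (∀ j, y j ^ 2 = z j) ∧
        ∃ ε : ℂ, (ε = 1 ∨ ε = -1) ∧ ∃ t : ℝ, 0 < t ∧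
          (PsiMap y r).1 = ε * w₁ ∧ (PsiMap y r).2.1 = ε * w₂ ∧
          (PsiMap y r).2.2.1 = ε * w₃ ∧ (PsiMap y r).2.2.2 = t * s) := by
  refine ⟨?_, ?_, ?_, ?_⟩
  · -- Part 1
    intro z r hz hr y y' hy hy'
    have hzne : ∀ j, z j ≠ 0 := by
      intro j h; have := hz j; rw [h] at this; simp at this
    have hyne : ∀ j, y j ≠ 0 := by
      intro j h
      exact hzne j (by rw [← hy j, h]; simp)
    have hyne' : ∀ j, y' j ≠ 0 := by
      intro j h
      exact hzne j (by rw [← hy' j, h]; simp)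
    have habs : ∀ j, ‖y j‖ = 1 := fun j =>
      abs_eq_one_of_sq' (by rw [hy j]; exact hz j)
    have hsq : ∀ j, y' j ^ 2 = y j ^ 2 := fun j => by rw [hy j, hy' j]
    constructor
    · refine ⟨?_, ?_, ?_, ?_⟩ <;>
        simp [PsiMap, map_div₀, map_mul, habs, pow_pos hr]
    · refine ⟨(y' 0 / y 0) * (y' 1 / y 1) * (y' 2 / y 2) * (y' 3 / y 3), ?_, ?_, ?_, ?_, rfl⟩
      · apply sq_cases'
        have : ∀ j, (y' j / y j) ^ 2 = 1 := fun j => by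
          rw [div_pow, hsq j, div_self (pow_ne_zero 2 (hyne j))]
        rw [mul_pow, mul_pow, mul_pow, this 0, this 1, this 2, this 3]; norm_num
      · exact comp_eq' (hyne 0) (hyne 1) (hyne 2) (hyne 3) (hsq 1) (hsq 3)
      · have := comp_eq' (a' := y' 0) (b' := y' 1) (c' := y' 3) (d' := y' 2)
          (hyne 0) (hyne 1) (hyne 3) (hyne 2) (hsq 1) (hsq 2)
        rw [show (y' 0 / y 0) * (y' 1 / y 1) * (y' 3 / y 3) * (y' 2 / y 2)
            = (y' 0 / y 0) * (y' 1 / y 1) * (y' 2 / y 2) * (y' 3 / y 3) from by ring] at this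
        exact this
      · have := comp_eq' (a' := y' 0) (b' := y' 2) (c' := y' 1) (d' := y' 3)
          (hyne 0) (hyne 2) (hyne 1) (hyne 3) (hsq 2) (hsq 3)
        rw [show (y' 0 / y 0) * (y' 2 / y 2) * (y' 1 / y 1) * (y' 3 / y 3)
            = (y' 0 / y 0) * (y' 1 / y 1) * (y' 2 / y 2) * (y' 3 / y 3) from by ring] at this
        exact this
  · -- Part 2: homomorphism
    intro y y' r r'
    refine Prod.ext ?_ (Prod.ext ?_ (Prod.ext ?_ ?_)) <;> simp [PsiMap] <;> ring
  · -- Part 3: kernel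
    intro z r hz hr y hy
    have hzne : ∀ j, z j ≠ 0 := by
      intro j h; have := hz j; rw [h] at this; simp at this
    have hyne : ∀ j, y j ≠ 0 := by
      intro j h
      exact hzne j (by rw [← hy j, h]; simp)
    constructor
    · rintro ⟨ε, hε, s, hs, h1, h2, h3, -⟩
      have hε2 : ε ^ 2 = 1 := by rcases hε with h | h <;> rw [h] <;> norm_num
      have hεne : ε ≠ 0 := by rcases hε with h | h <;> rw [h] <;> norm_num
      simp only [PsiMap] at h1 h2 h3
      have e1 : y 0 * y 2 = ε * (y 1 * y 3) :=
        (div_eq_iff (mul_ne_zero (hyne 1) (hyne 3))).mp h1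
      have e2 : y 0 * y 3 = ε * (y 1 * y 2) :=
        (div_eq_iff (mul_ne_zero (hyne 1) (hyne 2))).mp h2
      have e3 : y 0 * y 1 = ε * (y 2 * y 3) :=
        (div_eq_iff (mul_ne_zero (hyne 2) (hyne 3))).mp h3
      have k01 : z 0 = z 1 := by
        rw [← hy 0, ← hy 1]
        apply mul_right_cancel₀ (mul_ne_zero (hyne 2) (hyne 3))
        linear_combination (y 0 * y 3) * e1 + (ε * y 1 * y 3) * e2 + (y 1 ^ 2 * y 2 * y 3) * hε2
      have k23 : z 2 = z 3 := by
        rw [← hy 2, ← hy 3]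
        apply mul_right_cancel₀ (mul_ne_zero (hyne 0) (hyne 1))
        linear_combination (y 1 * y 2) * e1 - (y 1 * y 3) * e2
      have k02 : z 0 = z 2 := by
        rw [← hy 0, ← hy 2]
        apply mul_right_cancel₀ (mul_ne_zero (hyne 1) (hyne 3))
        linear_combination (y 0 * y 1) * e2 + (ε * y 1 * y 2) * e3 + (y 1 * y 2 ^ 2 * y 3) * hε2
      exact ⟨k01, k01 ▸ k02, k23⟩
    · rintro ⟨k01, k12, k23⟩
      have hs1 : y 1 ^ 2 = y 0 ^ 2 := by rw [hy 0, hy 1, k01]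
      have hs2 : y 2 ^ 2 = y 0 ^ 2 := by rw [hy 0, hy 2, ← k12, ← k01]
      have hs3 : y 3 ^ 2 = y 0 ^ 2 := by rw [hy 0, hy 3, ← k23, ← k12, ← k01]
      refine ⟨(y 1 / y 0) * (y 2 / y 0) * (y 3 / y 0), ?_, r ^ 2, pow_pos hr 2, ?_, ?_, ?_, rfl⟩
      · apply sq_cases'
        have : ∀ j, y j ^ 2 = y 0 ^ 2 → (y j / y 0) ^ 2 = 1 := fun j h => by
          rw [div_pow, h, div_self (pow_ne_zero 2 (hyne 0))]
        rw [mul_pow, mul_pow, this 1 hs1, this 2 hs2, this 3 hs3]; norm_num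
      · show y 0 * y 2 / (y 1 * y 3) = _
        field_simp [hyne 0, hyne 1, hyne 2, hyne 3]
        linear_combination (-(y 3 ^ 2)) * hs1 - (y 0 ^ 2) * hs3
      · show y 0 * y 3 / (y 1 * y 2) = _
        field_simp [hyne 0, hyne 1, hyne 2, hyne 3]
        linear_combination (-(y 2 ^ 2)) * hs1 - (y 0 ^ 2) * hs2
      · show y 0 * y 1 / (y 2 * y 3) = _
        field_simp [hyne 0, hyne 1, hyne 2, hyne 3]
        linear_combination (-(y 3 ^ 2)) * hs2 - (y 0 ^ 2) * hs3
  · -- Part 4: surjectivity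
    intro w₁ w₂ w₃ s h1 h2 h3 hs
    have hw1 : w₁ ≠ 0 := by intro h; rw [h] at h1; simp at h1
    have hw2 : w₂ ≠ 0 := by intro h; rw [h] at h2; simp at h2
    have hw3 : w₃ ≠ 0 := by intro h; rw [h] at h3; simp at h3
    obtain ⟨a, ha⟩ := exists_sqrt' (inv_ne_zero (mul_ne_zero hw1 hw2))
    obtain ⟨b, hb⟩ := exists_sqrt' (inv_ne_zero (mul_ne_zero hw2 hw3))
    have hane : a ≠ 0 := by
      intro h; rw [h] at ha
      exact inv_ne_zero (mul_ne_zero hw1 hw2) (by simpa using ha.symm)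
    have hbne : b ≠ 0 := by
      intro h; rw [h] at hb
      exact inv_ne_zero (mul_ne_zero hw2 hw3) (by simpa using hb.symm)
    set y : Fin 4 → ℂ := ![1, a, b, w₂ * a * b] with hydef
    have hy0 : y 0 = 1 := rfl
    have hy1 : y 1 = a := rfl
    have hy2 : y 2 = b := rfl
    have hy3 : y 3 = w₂ * a * b := rfl
    refine ⟨fun j => y j ^ 2, 1, y, ?_, one_pos, fun j => rfl, 1, Or.inl rfl,
      s⁻¹, inv_pos.2 hs, ?_, ?_, ?_, ?_⟩
    · intro j
      fin_cases j <;>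
        simp [hydef, ha, hb, mul_pow, map_mul, map_inv₀, map_pow, h1, h2, h3]
    · show y 0 * y 2 / (y 1 * y 3) = 1 * w₁
      rw [hy0, hy1, hy2, hy3]
      have ha' : a ^ 2 * (w₁ * w₂) = 1 := by rw [ha]; field_simp
      field_simp
      linear_combination (-1 : ℂ) * ha'
    · show y 0 * y 3 / (y 1 * y 2) = 1 * w₂
      rw [hy0, hy1, hy2, hy3]
      field_simp
    · show y 0 * y 1 / (y 2 * y 3) = 1 * w₃
      rw [hy0, hy1, hy2, hy3]
      have hb' : b ^ 2 * (w₂ * w₃) = 1 := by rw [hb]; field_simp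
      field_simp
      linear_combination (-1 : ℂ) * hb'
    · show ((1 : ℝ)) ^ 2 = s⁻¹ * s
      rw [inv_mul_cancel₀ hs.ne']; norm_num
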